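/- Let κ > 0 and let d ≥ 1 be an integer. Set u₀ = (4/(3κ))^κ. Then for all u > 0, f_κ(u) = Σ_{m ≥ 1} (m + d/κ)^{−κm} · u^m ≤ 6 · (max(u, u₀))^{1/κ} · exp(κ · (max(u, u₀))^{1/κ}). -/

import Mathlib

/- STATEMENT 15: For κ > 0, an integer d ≥ 1 and u > 0, with u₀ = (4/(3κ))^κ,
   f_κ(u) = Σ_{m ≥ 1} (m + d/κ)^{−κm} u^m ≤ 6 (max u u₀)^{1/κ} exp(κ (max u u₀)^{1/κ}). -/

/-- The function f_κ(u) = Σ_{m ≥ 1} (m + d/κ)^{−κm} u^m. -/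
noncomputable def fkappa (d : ℕ) (κ u : ℝ) : ℝ :=
  ∑' m : ℕ, (((m : ℝ) + 1) + (d : ℝ) / κ) ^ (-(κ * ((m : ℝ) + 1))) * u ^ (m + 1)

theorem stmt15 (κ : ℝ) (hκ : 0 < κ) (d : ℕ) (hd : 1 ≤ d) (u : ℝ) (hu : 0 < u) :
    Summable (fun m : ℕ =>
      (((m : ℝ) + 1) + (d : ℝ) / κ) ^ (-(κ * ((m : ℝ) + 1))) * u ^ (m + 1)) ∧
    fkappa d κ u ≤
      6 * (max u ((4 / (3 * κ)) ^ κ)) ^ (1 / κ) *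
        Real.exp (κ * (max u ((4 / (3 * κ)) ^ κ)) ^ (1 / κ)) := by
  have h43 : (0:ℝ) < 4 / (3 * κ) := by positivity
  set U : ℝ := max u ((4 / (3 * κ)) ^ κ) with hUdef
  set B : ℝ := U ^ (1 / κ) with hBdef
  have hUpos : 0 < U := lt_of_lt_of_le hu (le_max_left _ _)
  have hBpos : 0 < B := Real.rpow_pos_of_pos hUpos _
  have hBk : B ^ κ = U := by
    rw [hBdef, ← Real.rpow_mul hUpos.le, one_div, inv_mul_cancel₀ hκ.ne', Real.rpow_one]
  have hB43 : 4 / (3 * κ) ≤ B := by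
    have h1 : ((4 / (3 * κ)) ^ κ : ℝ) ≤ U := le_max_right _ _
    have h2 : (((4 / (3 * κ)) ^ κ : ℝ)) ^ (1/κ) ≤ U ^ (1/κ) :=
      Real.rpow_le_rpow (by positivity) h1 (by positivity)
    rwa [← Real.rpow_mul h43.le, mul_one_div, div_self hκ.ne', Real.rpow_one] at h2
  have huB : u ≤ B ^ κ := hBk ▸ le_max_left _ _
  -- key termwise bound
  have key : ∀ m : ℕ, (((m : ℝ) + 1) + (d : ℝ) / κ) ^ (-(κ * ((m : ℝ) + 1))) * u ^ (m + 1)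
      ≤ Real.exp (κ * B) * Real.exp (-κ) ^ (m + 1) := by
    intro m
    set n : ℝ := (m : ℝ) + 1 with hn
    have hnpos : (0:ℝ) < n := by positivity
    have hdk : (0:ℝ) ≤ (d:ℝ) / κ := by positivity
    have h1 : (n + (d:ℝ)/κ) ^ (-(κ * n)) ≤ n ^ (-(κ * n)) := by
      rw [Real.rpow_neg (by linarith), Real.rpow_neg hnpos.le]
      apply inv_anti₀ (Real.rpow_pos_of_pos hnpos _)
      exact Real.rpow_le_rpow hnpos.le (by linarith) (by positivity)
    have h2 : u ^ (m + 1) ≤ (B ^ κ) ^ (m + 1) := pow_le_pow_left₀ hu.le huB _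
    have h3 : (((m : ℝ) + 1) + (d : ℝ) / κ) ^ (-(κ * n)) * u ^ (m + 1)
        ≤ n ^ (-(κ * n)) * (B ^ κ) ^ (m + 1) := by
      apply mul_le_mul h1 h2 (by positivity) (Real.rpow_nonneg hnpos.le _)
    refine h3.trans ?_
    have hBkn : (B ^ κ) ^ (m + 1) = B ^ (κ * n) := by
      rw [← Real.rpow_natCast (B ^ κ) (m + 1), ← Real.rpow_mul hBpos.le]
      congr 1
      push_cast [hn]
      ring
    have hdiv : n ^ (-(κ * n)) * (B ^ κ) ^ (m + 1) = (B / n) ^ (κ * n) := by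
      rw [hBkn, Real.div_rpow hBpos.le hnpos.le, Real.rpow_neg hnpos.le]
      ring
    rw [hdiv]
    have hlog : Real.log (B / n) ≤ B / n - 1 :=
      Real.log_le_sub_one_of_pos (by positivity)
    have hexp : (B / n) ^ (κ * n) = Real.exp (κ * n * Real.log (B / n)) := by
      rw [Real.rpow_def_of_pos (by positivity)]
      ring_nf
    rw [hexp, ← Real.exp_nat_mul, ← Real.exp_add]
    apply Real.exp_le_exp.mpr
    have : κ * n * Real.log (B / n) ≤ κ * n * (B / n - 1) := by
      apply mul_le_mul_of_nonneg_left hlog (by positivity)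
    refine this.trans ?_
    have : κ * n * (B / n - 1) = κ * B - κ * n := by
      field_simp
    rw [this]
    exact le_of_eq (by push_cast; rw [hn]; ring)
  have hr0 : (0:ℝ) ≤ Real.exp (-κ) := (Real.exp_pos _).le
  have hr1 : Real.exp (-κ) < 1 := Real.exp_lt_one_iff.mpr (by linarith)
  have hg : Summable (fun m : ℕ => Real.exp (κ * B) * Real.exp (-κ) ^ (m + 1)) := by
    have h := (summable_geometric_of_lt_one hr0 hr1).mul_left
      (Real.exp (κ * B) * Real.exp (-κ))
    exact h.congr fun m => by rw [pow_succ]; ring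
  have hfnn : ∀ m : ℕ, 0 ≤ (((m : ℝ) + 1) + (d : ℝ) / κ) ^ (-(κ * ((m : ℝ) + 1))) * u ^ (m + 1) := by
    intro m
    have : (0:ℝ) ≤ ((m : ℝ) + 1) + (d : ℝ) / κ := by positivity
    positivity
  have hsum : Summable (fun m : ℕ =>
      (((m : ℝ) + 1) + (d : ℝ) / κ) ^ (-(κ * ((m : ℝ) + 1))) * u ^ (m + 1)) :=
    Summable.of_nonneg_of_le hfnn key hg
  refine ⟨hsum, ?_⟩
  have hle : fkappa d κ u ≤ ∑' m : ℕ, Real.exp (κ * B) * Real.exp (-κ) ^ (m + 1) :=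
    Summable.tsum_le_tsum key hsum hg
  refine hle.trans ?_
  have htsum : ∑' m : ℕ, Real.exp (κ * B) * Real.exp (-κ) ^ (m + 1)
      = Real.exp (κ * B) * Real.exp (-κ) * (1 - Real.exp (-κ))⁻¹ := by
    have h1 : ∀ m : ℕ, Real.exp (κ * B) * Real.exp (-κ) ^ (m + 1)
        = (Real.exp (κ * B) * Real.exp (-κ)) * Real.exp (-κ) ^ m := fun m => by ring
    simp_rw [h1]
    rw [tsum_mul_left, tsum_geometric_of_lt_one hr0 hr1]
  rw [htsum]
  have hE1 : 1 < Real.exp κ := by have := Real.add_one_le_exp κ; linarith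
  have hratio : Real.exp (-κ) * (1 - Real.exp (-κ))⁻¹ = (Real.exp κ - 1)⁻¹ := by
    rw [Real.exp_neg]
    have hE0 : Real.exp κ ≠ 0 := (Real.exp_pos κ).ne'
    field_simp
  have hkB : 1/κ ≤ 6 * B := by
    rw [div_le_iff₀ hκ]
    have h2 := mul_le_mul_of_nonneg_right hB43 hκ.le
    have h3 : 4 / (3 * κ) * κ = 4 / 3 := by field_simp
    nlinarith
  have hEk : κ ≤ Real.exp κ - 1 := by
    have := Real.add_one_le_exp κ
    linarith
  have hfinal : Real.exp (-κ) * (1 - Real.exp (-κ))⁻¹ ≤ 6 * B := by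
    rw [hratio]
    have h1 : (Real.exp κ - 1)⁻¹ ≤ 1/κ := by
      rw [one_div]
      exact inv_anti₀ hκ hEk
    linarith
  calc Real.exp (κ * B) * Real.exp (-κ) * (1 - Real.exp (-κ))⁻¹
      = (Real.exp (-κ) * (1 - Real.exp (-κ))⁻¹) * Real.exp (κ * B) := by ring
    _ ≤ (6 * B) * Real.exp (κ * B) := by
        apply mul_le_mul_of_nonneg_right hfinal (Real.exp_pos _).le
    _ = 6 * B * Real.exp (κ * B) := by ring
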